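/- Let d ≥ 1 and let x = m/n and x' = m'/n' be two points of S^d with m, m' ∈ ℤ^{d+1}, |m|² = n², |m'|² = n'², and n, n' positive integers. Then |x − x'|² = 2(nn' − ⟨m, m'⟩)/(nn'), and if x ≠ x' then |x − x'|² ≥ 2/(nn'). -/
import Mathlib


/-- Repulsion between rational points on the sphere: if `x = m/n` and `x' = m'/n'` lie
on `S^d`, then `|x - x'|² = 2(nn' - ⟨m,m'⟩)/(nn')`, and `|x - x'|² ≥ 2/(nn')` if `x ≠ x'`. -/
theorem rational_points_repulsion
    (d : ℕ) (hd : 1 ≤ d) (n n' : ℕ) (hn : 0 < n) (hn' : 0 < n')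
    (m m' : Fin (d + 1) → ℤ)
    (hm : (∑ i, m i ^ 2) = (n : ℤ) ^ 2) (hm' : (∑ i, m' i ^ 2) = (n' : ℤ) ^ 2)
    (x x' : EuclideanSpace ℝ (Fin (d + 1)))
    (hx : ∀ i, x i = (m i : ℝ) / (n : ℝ)) (hx' : ∀ i, x' i = (m' i : ℝ) / (n' : ℝ)) :
    ‖x - x'‖ ^ 2 = 2 * ((n : ℝ) * (n' : ℝ) - ((∑ i, m i * m' i : ℤ) : ℝ)) /
      ((n : ℝ) * (n' : ℝ)) ∧
    (x ≠ x' → 2 / ((n : ℝ) * (n' : ℝ)) ≤ ‖x - x'‖ ^ 2) := by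
  have hnR : (0 : ℝ) < n := by exact_mod_cast hn
  have hn'R : (0 : ℝ) < n' := by exact_mod_cast hn'
  have hprod : (0 : ℝ) < (n : ℝ) * (n' : ℝ) := mul_pos hnR hn'R
  have key : ‖x - x'‖ ^ 2 = 2 * ((n : ℝ) * (n' : ℝ) - ((∑ i, m i * m' i : ℤ) : ℝ)) /
      ((n : ℝ) * (n' : ℝ)) := by
    have hsum : ‖x - x'‖ ^ 2 = ∑ i, (x i - x' i) ^ 2 := by
      rw [EuclideanSpace.norm_eq, Real.sq_sqrt (by positivity)]
      congr 1; ext i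
      rw [Real.norm_eq_abs, sq_abs, PiLp.sub_apply]
    rw [hsum]
    have : ∀ i, (x i - x' i) ^ 2 =
        (m i : ℝ) ^ 2 / (n : ℝ) ^ 2 + (m' i : ℝ) ^ 2 / (n' : ℝ) ^ 2
          - 2 * ((m i : ℝ) * (m' i : ℝ)) / ((n : ℝ) * (n' : ℝ)) := by
      intro i
      rw [hx i, hx' i]
      field_simp
      ring
    simp_rw [this]
    rw [Finset.sum_sub_distrib, Finset.sum_add_distrib, ← Finset.sum_div, ← Finset.sum_div,
      ← Finset.sum_div]
    have h1 : (∑ i, (m i : ℝ) ^ 2) = (n : ℝ) ^ 2 := by exact_mod_cast congrArg Int.cast hm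
    have h2 : (∑ i, (m' i : ℝ) ^ 2) = (n' : ℝ) ^ 2 := by exact_mod_cast congrArg Int.cast hm'
    have h3 : (∑ i, 2 * ((m i : ℝ) * (m' i : ℝ))) = 2 * ((∑ i, m i * m' i : ℤ) : ℝ) := by
      rw [← Finset.mul_sum]; push_cast; ring
    rw [h1, h2, h3]
    field_simp
    ring
  refine ⟨key, fun hne => ?_⟩
  have hpos : 0 < ‖x - x'‖ ^ 2 := by
    have h0 : (0:ℝ) < ‖x - x'‖ := norm_pos_iff.mpr (sub_ne_zero.mpr hne)
    positivity
  rw [key] at hpos ⊢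
  set S : ℤ := ∑ i, m i * m' i with hS
  have hpos' : (0 : ℝ) < (n : ℝ) * (n' : ℝ) - (S : ℝ) := by
    by_contra h
    push_neg at h
    have : 2 * ((n : ℝ) * (n' : ℝ) - (S : ℝ)) / ((n : ℝ) * (n' : ℝ)) ≤ 0 := by
      apply div_nonpos_of_nonpos_of_nonneg
      · linarith
      · linarith
    linarith
  have hint : (1 : ℤ) ≤ (n : ℤ) * (n' : ℤ) - S := by
    have : (0 : ℝ) < (((n : ℤ) * (n' : ℤ) - S : ℤ) : ℝ) := by push_cast; linarith
    have := Int.cast_pos.mp this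
    omega
  have hintR : (1 : ℝ) ≤ (n : ℝ) * (n' : ℝ) - (S : ℝ) := by exact_mod_cast hint
  rw [div_le_div_iff₀ hprod hprod]
  nlinarith [hprod]
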